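/- Let m > 0, C3 ≥ 0 and C4 ≥ 0 be real numbers. Define M(t) = m/(t+1) and κ(t) = C4·(1 + 2·M(t)) for natural numbers t ≥ 1, and for natural numbers t1, t2 ≥ 1 define the window average κ̄_{t1,t2} = (1/(|t2−t1|+1))·∑_{t=min(t1,t2)}^{max(t1,t2)} κ(t). Let t0 and t be natural numbers with ⌊m⌋ < t0 ≤ t, and let a : ℕ → ℝ be a nonnegative sequence satisfying a(i+1) ≤ κ(i)·a(i) + C3 + C4·(M(i)² + 2·M(i)) for every i with t0 ≤ i ≤ t. Then a(t+1) ≤ κ̄_{t0,t}^{t−t0+1}·a(t0) + 3·m·C4·∑_{i=t0}^{t} κ̄_{t0+1,t}^{t−i}/(i+1) + C3·∑_{i=1}^{t−t0+1} κ̄_{t0+1,t}^{i−1}. -/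

import Mathlib

open Finset

/-- The optimizer drift bound `M(t) = m/(t+1)`. -/
noncomputable def Mdrift (m : ℝ) (t : ℕ) : ℝ := m / ((t : ℝ) + 1)

/-- The per-step contraction factor `κ(t) = C4·(1 + 2·M(t))`. -/
noncomputable def kap (m C4 : ℝ) (t : ℕ) : ℝ := C4 * (1 + 2 * Mdrift m t)

/-- The window average `κ̄_{t1,t2} = (1/(|t2−t1|+1))·∑_{t=min(t1,t2)}^{max(t1,t2)} κ(t)`. -/
noncomputable def kbar (m C4 : ℝ) (t1 t2 : ℕ) : ℝ :=
  (1 / (((max t1 t2 - min t1 t2 : ℕ) : ℝ) + 1)) *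
    ∑ t ∈ Finset.Icc (min t1 t2) (max t1 t2), kap m C4 t


/-- AM-GM: product of nonneg reals is at most the arithmetic mean to the card power. -/
lemma prod_le_avg_pow (s : Finset ℕ) (f : ℕ → ℝ) (hf : ∀ i ∈ s, 0 ≤ f i) (hs : s.Nonempty) :
    ∏ i ∈ s, f i ≤ ((∑ i ∈ s, f i) / (s.card : ℝ)) ^ s.card := by
  have hn : (0:ℝ) < s.card := by exact_mod_cast card_pos.mpr hs
  have h := Real.geom_mean_le_arith_mean_weighted s (fun _ => (s.card : ℝ)⁻¹) f
    (fun i _ => by positivity) (by simp [mul_inv_cancel₀ hn.ne']) hf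
  have hrw : ∑ i ∈ s, (s.card : ℝ)⁻¹ * f i = (∑ i ∈ s, f i) / s.card := by
    rw [← mul_sum]; ring
  rw [hrw] at h
  have hL : (0:ℝ) ≤ ∏ i ∈ s, f i ^ ((s.card : ℝ)⁻¹) :=
    prod_nonneg fun i hi => Real.rpow_nonneg (hf i hi) _
  have key : (∏ i ∈ s, f i ^ ((s.card : ℝ)⁻¹)) ^ s.card = ∏ i ∈ s, f i := by
    rw [← prod_pow]
    refine prod_congr rfl fun i hi => ?_
    rw [← Real.rpow_natCast (f i ^ ((s.card : ℝ)⁻¹)) s.card, ← Real.rpow_mul (hf i hi),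
      inv_mul_cancel₀ hn.ne', Real.rpow_one]
  calc ∏ i ∈ s, f i = (∏ i ∈ s, f i ^ ((s.card : ℝ)⁻¹)) ^ s.card := key.symm
    _ ≤ ((∑ i ∈ s, f i) / s.card) ^ s.card := pow_le_pow_left₀ hL h _

lemma kap_nonneg {m C4 : ℝ} (hm : 0 < m) (hC4 : 0 ≤ C4) (t : ℕ) : 0 ≤ kap m C4 t := by
  unfold kap Mdrift; positivity

lemma kap_anti {m C4 : ℝ} (hm : 0 < m) (hC4 : 0 ≤ C4) {j k : ℕ} (h : j ≤ k) :
    kap m C4 k ≤ kap m C4 j := by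
  unfold kap Mdrift
  have h1 : m / ((k:ℝ)+1) ≤ m / ((j:ℝ)+1) := by
    gcongr
  nlinarith

/-- for an antitone sequence, (t-t0)·(suffix sum) ≤ (t-i)·(window sum) -/
lemma suffix_avg_le {f : ℕ → ℝ} (hanti : ∀ j k, j ≤ k → f k ≤ f j)
    {t0 i t : ℕ} (h1 : t0 ≤ i) (h2 : i < t) :
    ((t:ℝ) - t0) * ∑ j ∈ Icc (i+1) t, f j ≤ ((t:ℝ) - i) * ∑ j ∈ Icc (t0+1) t, f j := by
  have hsplit : ∑ j ∈ Icc (t0+1) t, f j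
      = ∑ j ∈ Icc (t0+1) i, f j + ∑ j ∈ Icc (i+1) t, f j := by
    rw [← Finset.sum_union]
    · congr 1
      rw [Finset.ext_iff]; intro x; simp only [mem_union, mem_Icc]; omega
    · rw [Finset.disjoint_left]; intro x hx hx'; simp only [mem_Icc] at hx hx'; omega
  -- each prefix term ≥ f (i+1) ≥ each suffix term
  have hP : ((i:ℝ) - t0) * f (i+1) ≤ ∑ j ∈ Icc (t0+1) i, f j := by
    have := Finset.card_nsmul_le_sum (Icc (t0+1) i) f (f (i+1))
      (fun j hj => hanti j (i+1) (by simp only [mem_Icc] at hj; omega))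
    rw [Nat.card_Icc] at this
    have hc : ((i + 1 - (t0+1) : ℕ) : ℝ) = (i:ℝ) - t0 := by
      have : i + 1 - (t0+1) = i - t0 := by omega
      rw [this, Nat.cast_sub h1]
    rw [nsmul_eq_mul] at this
    calc ((i:ℝ) - t0) * f (i+1) = ((i + 1 - (t0+1) : ℕ) : ℝ) * f (i+1) := by rw [hc]
      _ ≤ _ := this
  have hS : ∑ j ∈ Icc (i+1) t, f j ≤ ((t:ℝ) - i) * f (i+1) := by
    have := Finset.sum_le_card_nsmul (Icc (i+1) t) f (f (i+1))
      (fun j hj => hanti (i+1) j (by simp only [mem_Icc] at hj; omega))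
    rw [Nat.card_Icc, nsmul_eq_mul] at this
    have hc : ((t + 1 - (i+1) : ℕ) : ℝ) = (t:ℝ) - i := by
      have : t + 1 - (i+1) = t - i := by omega
      rw [this, Nat.cast_sub h2.le]
    rwa [hc] at this
  have hti : (0:ℝ) ≤ (t:ℝ) - i := by
    have : (i:ℝ) ≤ t := by exact_mod_cast h2.le
    linarith
  have hit0 : (0:ℝ) ≤ (i:ℝ) - t0 := by
    have : (t0:ℝ) ≤ i := by exact_mod_cast h1
    linarith
  have key : ((i:ℝ) - t0) * ∑ j ∈ Icc (i+1) t, f j ≤ ((t:ℝ) - i) * ∑ j ∈ Icc (t0+1) i, f j := by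
    calc ((i:ℝ) - t0) * ∑ j ∈ Icc (i+1) t, f j ≤ ((i:ℝ) - t0) * (((t:ℝ) - i) * f (i+1)) :=
          mul_le_mul_of_nonneg_left hS hit0
      _ = ((t:ℝ) - i) * (((i:ℝ) - t0) * f (i+1)) := by ring
      _ ≤ ((t:ℝ) - i) * ∑ j ∈ Icc (t0+1) i, f j := mul_le_mul_of_nonneg_left hP hti
  rw [hsplit]
  nlinarith [key]

/-- telescoping the recursion -/
lemma telescope {f b a : ℕ → ℝ} (hf : ∀ i, 0 ≤ f i) {t0 : ℕ} :
    ∀ t, t0 ≤ t → (∀ i, t0 ≤ i → i ≤ t → a (i+1) ≤ f i * a i + b i) →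
    a (t+1) ≤ (∏ j ∈ Icc t0 t, f j) * a t0
      + ∑ i ∈ Icc t0 t, (∏ j ∈ Icc (i+1) t, f j) * b i := by
  intro t
  induction t with
  | zero =>
    intro ht hrec
    interval_cases t0
    simpa using hrec 0 le_rfl le_rfl
  | succ n ih =>
    intro ht hrec
    rcases Nat.lt_or_ge n t0 with h | h
    · -- t0 = n+1
      have : t0 = n + 1 := by omega
      subst this
      simpa using hrec (n+1) le_rfl le_rfl
    · have IH := ih h (fun i hi hi' => hrec i hi (by omega))
      have step := hrec (n+1) (by omega) le_rfl
      have hfn : 0 ≤ f (n+1) := hf (n+1)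
      have := mul_le_mul_of_nonneg_left IH hfn
      have main : a (n+1+1) ≤ f (n+1) * ((∏ j ∈ Icc t0 n, f j) * a t0
          + ∑ i ∈ Icc t0 n, (∏ j ∈ Icc (i+1) n, f j) * b i) + b (n+1) := by linarith
      refine main.trans (le_of_eq ?_)
      rw [Finset.prod_Icc_succ_top (by omega : t0 ≤ n+1),
        Finset.sum_Icc_succ_top (by omega : t0 ≤ n+1)]
      have h1 : ∀ i ∈ Icc t0 n, (∏ j ∈ Icc (i+1) (n+1), f j) * b i
          = f (n+1) * ((∏ j ∈ Icc (i+1) n, f j) * b i) := by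
        intro i hi
        simp only [mem_Icc] at hi
        rw [Finset.prod_Icc_succ_top (by omega : i+1 ≤ n+1)]
        ring
      rw [Finset.sum_congr rfl h1, ← Finset.mul_sum]
      have h2 : Icc (n+1+1) (n+1) = ∅ := by rw [Finset.Icc_eq_empty_iff]; omega
      rw [h2, Finset.prod_empty]
      ring

theorem telescoped_convergence_bound
    (m C3 C4 : ℝ) (hm : 0 < m) (hC3 : 0 ≤ C3) (hC4 : 0 ≤ C4)
    (t0 t : ℕ) (ht0 : (Nat.floor m : ℕ) < t0) (ht : t0 ≤ t)
    (a : ℕ → ℝ) (ha : ∀ i, 0 ≤ a i)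
    (hrec : ∀ i, t0 ≤ i → i ≤ t →
      a (i + 1) ≤ kap m C4 i * a i + C3 + C4 * ((Mdrift m i) ^ 2 + 2 * Mdrift m i)) :
    a (t + 1) ≤ (kbar m C4 t0 t) ^ (t - t0 + 1) * a t0
      + 3 * m * C4 * ∑ i ∈ Finset.Icc t0 t, (kbar m C4 (t0 + 1) t) ^ (t - i) / ((i : ℝ) + 1)
      + C3 * ∑ i ∈ Finset.Icc 1 (t - t0 + 1), (kbar m C4 (t0 + 1) t) ^ (i - 1) := by
  set f := kap m C4 with hfdef
  have hf : ∀ i, 0 ≤ f i := kap_nonneg hm hC4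
  have hanti : ∀ j k, j ≤ k → f k ≤ f j := fun j k h => kap_anti hm hC4 h
  have hm_lt : ∀ i : ℕ, t0 ≤ i → m < (i:ℝ) + 1 := by
    intro i hi
    have h1 : m < (Nat.floor m : ℝ) + 1 := Nat.lt_floor_add_one m
    have h2 : ((Nat.floor m : ℕ):ℝ) + 1 ≤ (i:ℝ) + 1 := by
      have : (Nat.floor m) + 1 ≤ i + 1 := by omega
      exact_mod_cast this
    linarith
  -- modified recursion with coefficient 3mC4/(i+1)
  have hrec' : ∀ i, t0 ≤ i → i ≤ t →
      a (i+1) ≤ f i * a i + (C3 + 3*m*C4/((i:ℝ)+1)) := by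
    intro i hi hi'
    have h := hrec i hi hi'
    have hM : 0 ≤ Mdrift m i := by unfold Mdrift; positivity
    have hM1 : Mdrift m i ≤ 1 := by
      unfold Mdrift
      rw [div_le_one (by positivity)]
      exact (hm_lt i hi).le
    have hb : C4 * ((Mdrift m i)^2 + 2 * Mdrift m i) ≤ 3*m*C4/((i:ℝ)+1) := by
      have h3 : (Mdrift m i)^2 + 2*Mdrift m i ≤ 3 * Mdrift m i := by nlinarith
      calc C4 * ((Mdrift m i)^2 + 2*Mdrift m i) ≤ C4 * (3 * Mdrift m i) :=
            mul_le_mul_of_nonneg_left h3 hC4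
        _ = 3*m*C4/((i:ℝ)+1) := by unfold Mdrift; ring
    linarith
  have htel := telescope hf t ht hrec'
  -- bound the leading product
  have hP0 : ∏ j ∈ Icc t0 t, f j ≤ (kbar m C4 t0 t) ^ (t - t0 + 1) := by
    have h := prod_le_avg_pow (Icc t0 t) f (fun i _ => hf i)
      ⟨t0, by simp [mem_Icc, ht]⟩
    have hcard : (Icc t0 t).card = t - t0 + 1 := by rw [Nat.card_Icc]; omega
    have hk : kbar m C4 t0 t = (∑ j ∈ Icc t0 t, f j) / (((Icc t0 t).card : ℕ) : ℝ) := by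
      unfold kbar
      rw [min_eq_left ht, max_eq_right ht, hcard]
      have hc : ((t - t0 + 1 : ℕ):ℝ) = ((t - t0 : ℕ):ℝ) + 1 := by push_cast; ring
      rw [hc]; ring
    rw [hk, ← hcard]
    exact h
  have hkb2 : 0 ≤ kbar m C4 (t0+1) t := by
    unfold kbar
    apply mul_nonneg
    · positivity
    · exact sum_nonneg fun j _ => kap_nonneg hm hC4 j
  -- bound the tail products
  have hPi : ∀ i, t0 ≤ i → i ≤ t →
      ∏ j ∈ Icc (i+1) t, f j ≤ (kbar m C4 (t0+1) t) ^ (t - i) := by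
    intro i hi hi'
    rcases eq_or_lt_of_le hi' with rfl | hlt
    · rw [Finset.Icc_eq_empty (by omega), Finset.prod_empty, Nat.sub_self, pow_zero]
    · have h := prod_le_avg_pow (Icc (i+1) t) f (fun j _ => hf j)
        ⟨i+1, by simp only [mem_Icc]; omega⟩
      have hcard : (Icc (i+1) t).card = t - i := by rw [Nat.card_Icc]; omega
      rw [hcard] at h
      have hcast : ((t - i : ℕ):ℝ) = (t:ℝ) - i := by
        rw [Nat.cast_sub hi']
      have hsum_nonneg : 0 ≤ ∑ j ∈ Icc (i+1) t, f j := sum_nonneg fun j _ => hf j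
      have havg : (∑ j ∈ Icc (i+1) t, f j) / ((t - i : ℕ):ℝ) ≤ kbar m C4 (t0+1) t := by
        have ht0t : t0 + 1 ≤ t := by omega
        have hk2 : kbar m C4 (t0+1) t = (∑ j ∈ Icc (t0+1) t, f j) / ((t:ℝ) - t0) := by
          unfold kbar
          rw [min_eq_left ht0t, max_eq_right ht0t]
          have hc : ((t - (t0+1) : ℕ):ℝ) + 1 = (t:ℝ) - t0 := by
            rw [Nat.cast_sub ht0t]; push_cast; ring
          rw [hc]; ring
        have hti : (0:ℝ) < (t:ℝ) - i := by
          have : (i:ℝ) < t := by exact_mod_cast hlt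
          linarith
        have htt0 : (0:ℝ) < (t:ℝ) - t0 := by
          have : (t0:ℝ) < t := by exact_mod_cast lt_of_le_of_lt hi hlt
          linarith
        rw [hk2, hcast, div_le_div_iff₀ hti htt0]
        have key := suffix_avg_le hanti hi hlt
        calc (∑ j ∈ Icc (i+1) t, f j) * ((t:ℝ) - t0)
            = ((t:ℝ) - t0) * ∑ j ∈ Icc (i+1) t, f j := by ring
          _ ≤ ((t:ℝ) - i) * ∑ j ∈ Icc (t0+1) t, f j := key
          _ = (∑ j ∈ Icc (t0+1) t, f j) * ((t:ℝ) - i) := by ring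
      have havg_nonneg : 0 ≤ (∑ j ∈ Icc (i+1) t, f j) / ((t - i : ℕ):ℝ) := by
        apply div_nonneg hsum_nonneg; positivity
      exact h.trans (pow_le_pow_left₀ havg_nonneg havg _)
  -- assemble
  have hstep2 : ∑ i ∈ Icc t0 t, (∏ j ∈ Icc (i+1) t, f j) * (C3 + 3*m*C4/((i:ℝ)+1))
      ≤ ∑ i ∈ Icc t0 t, (kbar m C4 (t0+1) t) ^ (t - i) * (C3 + 3*m*C4/((i:ℝ)+1)) := by
    apply Finset.sum_le_sum
    intro i hi
    simp only [mem_Icc] at hi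
    apply mul_le_mul_of_nonneg_right (hPi i hi.1 hi.2)
    have : (0:ℝ) ≤ 3*m*C4/((i:ℝ)+1) := by positivity
    linarith
  have hsplit : ∑ i ∈ Icc t0 t, (kbar m C4 (t0+1) t) ^ (t - i) * (C3 + 3*m*C4/((i:ℝ)+1))
      = 3*m*C4 * (∑ i ∈ Icc t0 t, (kbar m C4 (t0+1) t) ^ (t - i) / ((i:ℝ)+1))
        + C3 * ∑ i ∈ Icc t0 t, (kbar m C4 (t0+1) t) ^ (t - i) := by
    rw [Finset.mul_sum, Finset.mul_sum, ← Finset.sum_add_distrib]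
    exact sum_congr rfl fun i _ => by ring
  have hre : ∑ i ∈ Icc t0 t, (kbar m C4 (t0+1) t) ^ (t - i)
      = ∑ i ∈ Icc 1 (t - t0 + 1), (kbar m C4 (t0+1) t) ^ (i - 1) := by
    refine Finset.sum_nbij' (i := fun a => t + 1 - a) (j := fun b => t + 1 - b)
      ?_ ?_ ?_ ?_ ?_
    · intro a ha'; simp only [mem_Icc] at *; omega
    · intro b hb; simp only [mem_Icc] at *; omega
    · intro a ha'; simp only [mem_Icc] at ha'; omega
    · intro b hb; simp only [mem_Icc] at hb; omega
    · intro a ha'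
      simp only [mem_Icc] at ha'
      congr 1
      omega
  have hfirst : (∏ j ∈ Icc t0 t, f j) * a t0 ≤ (kbar m C4 t0 t) ^ (t - t0 + 1) * a t0 :=
    mul_le_mul_of_nonneg_right hP0 (ha t0)
  calc a (t+1) ≤ (∏ j ∈ Icc t0 t, f j) * a t0
        + ∑ i ∈ Icc t0 t, (∏ j ∈ Icc (i+1) t, f j) * (C3 + 3*m*C4/((i:ℝ)+1)) := htel
    _ ≤ (kbar m C4 t0 t) ^ (t - t0 + 1) * a t0
        + ∑ i ∈ Icc t0 t, (kbar m C4 (t0+1) t) ^ (t - i) * (C3 + 3*m*C4/((i:ℝ)+1)) :=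
      add_le_add hfirst hstep2
    _ = (kbar m C4 t0 t) ^ (t - t0 + 1) * a t0
        + 3 * m * C4 * ∑ i ∈ Finset.Icc t0 t, (kbar m C4 (t0 + 1) t) ^ (t - i) / ((i : ℝ) + 1)
        + C3 * ∑ i ∈ Finset.Icc 1 (t - t0 + 1), (kbar m C4 (t0 + 1) t) ^ (i - 1) := by
      rw [hsplit, hre]; ring
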